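/- Let 1 < p < ∞, M ≥ 1, r := 1 + 1/M, and Φ(t) := t^{p'r} with p' = p/(p−1). Then there is a constant C depending only on p such that [Φ̄]_{B_p} ≤ C·M, where Φ̄ is the complementary Young function of Φ. -/

import Mathlib

noncomputable section
open Set ENNReal MeasureTheory

/-- The complementary (conjugate) Young function: `φ̄(t) = sup_{s > 0} (s*t - φ(s))`. -/
def conjYoung (Φ : ℝ → ℝ) (t : ℝ) : ℝ :=
  sSup {u : ℝ | ∃ s : ℝ, 0 < s ∧ u = s * t - Φ s}

/-- `[φ]_{B_q} = ∫_{1/2}^∞ φ(t) t^{-q-1} dt`, as an extended nonnegative real. -/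
def bpConst (q : ℝ) (Φ : ℝ → ℝ) : ℝ≥0∞ :=
  ∫⁻ t in Set.Ioi ((1 : ℝ) / 2), ENNReal.ofReal (Φ t / t ^ (q + 1))

/-- for `1 < p < ∞`, `M ≥ 1`, `r = 1 + 1/M` and `Φ(t) = t^{p'r}`,
one has `[Φ̄]_{B_p} ≤ C·M` with `C` depending only on `p`. -/
theorem stmt16 (p : ℝ) (hp : 1 < p) :
    ∃ C : ℝ, 0 < C ∧ ∀ M : ℝ, 1 ≤ M →
      bpConst p (conjYoung (fun t => t ^ (p / (p - 1) * (1 + 1 / M)))) ≤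
        ENNReal.ofReal (C * M) := by
  have hp0 : (0:ℝ) < p - 1 := by linarith
  set p' := p / (p - 1) with hp'def
  have hp'1 : 1 < p' := by
    rw [hp'def, lt_div_iff₀ hp0]; linarith
  refine ⟨2 ^ p * (2 * p' - 1) / p,
    div_pos (mul_pos (Real.rpow_pos_of_pos two_pos p) (by linarith)) (by linarith), ?_⟩
  intro M hM
  have hM0 : (0:ℝ) < M := by linarith
  have hr1 : (1:ℝ) < 1 + 1 / M := by
    have : (0:ℝ) < 1 / M := by positivity
    linarith
  have hr2 : (1:ℝ) + 1 / M ≤ 2 := by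
    have : 1 / M ≤ 1 := by rw [div_le_one hM0]; exact hM
    linarith
  set a := p' * (1 + 1 / M) with hadef
  have ha1 : 1 < a := by nlinarith
  have ha0 : (0:ℝ) < a - 1 := by linarith
  set q := a / (a - 1) with hqdef
  have hconj : a.HolderConjugate q := (Real.holderConjugate_iff_eq_conjExponent ha1).2 hqdef
  have hq1 : 1 < q := hconj.symm.lt
  have hq_mul : q * (a - 1) = a := div_mul_cancel₀ a ha0.ne'
  have ha'' : a * (p - 1) * M = p * M + p := by
    rw [hadef, hp'def]; field_simp
  have key : p - q = p / (M * (a - 1)) := by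
    rw [_root_.eq_div_iff (by positivity)]
    linear_combination (-M) * hq_mul + ha''
  have ha_ub : a - 1 ≤ 2 * p' - 1 := by
    have : a ≤ p' * 2 := by
      apply mul_le_mul_of_nonneg_left hr2 (by linarith)
    linarith
  have hden : (0:ℝ) < M * (2 * p' - 1) := by nlinarith
  have hpq_lb : p / (M * (2 * p' - 1)) ≤ p - q := by
    rw [key]
    apply div_le_div_of_nonneg_left (by linarith) (by positivity)
    nlinarith
  have hqp : q < p := by
    have : (0:ℝ) < p / (M * (2 * p' - 1)) := by positivity
    linarith
  -- Pointwise bound on the conjugate Young function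
  have hconjY : ∀ t : ℝ, t ∈ Ioi ((1:ℝ)/2) →
      conjYoung (fun s => s ^ a) t ≤ t ^ q := by
    intro t ht
    have ht0 : (0:ℝ) < t := lt_trans (by norm_num) ht
    apply Real.sSup_le
    · rintro u ⟨s, hs, rfl⟩
      have hy := Real.young_inequality_of_nonneg hs.le ht0.le hconj
      have h1 : s ^ a / a ≤ s ^ a :=
        div_le_self (Real.rpow_nonneg hs.le a) ha1.le
      have h2 : t ^ q / q ≤ t ^ q :=
        div_le_self (Real.rpow_nonneg ht0.le q) hq1.le
      linarith
    · exact Real.rpow_nonneg ht0.le q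
  -- Bound bpConst by an explicit rpow integral
  have hexp : q - p - 1 < -1 := by linarith
  have hint : IntegrableOn (fun t : ℝ => t ^ (q - p - 1)) (Ioi ((1:ℝ)/2)) :=
    integrableOn_Ioi_rpow_of_lt hexp (by norm_num)
  have step2 : bpConst p (conjYoung (fun t => t ^ a)) ≤
      ∫⁻ t in Ioi ((1:ℝ)/2), ENNReal.ofReal (t ^ (q - p - 1)) := by
    apply setLIntegral_mono (by fun_prop)
    intro t ht
    have ht0 : (0:ℝ) < t := lt_trans (by norm_num) ht
    apply ENNReal.ofReal_le_ofReal
    have hb := hconjY t ht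
    have htp : (0:ℝ) < t ^ (p + 1) := Real.rpow_pos_of_pos ht0 _
    rw [show q - p - 1 = q - (p + 1) by ring, Real.rpow_sub ht0]
    exact by gcongr

  have step3 : (∫⁻ t in Ioi ((1:ℝ)/2), ENNReal.ofReal (t ^ (q - p - 1))) =
      ENNReal.ofReal (((1:ℝ)/2) ^ (q - p) / (p - q)) := by
    rw [← ofReal_integral_eq_lintegral_ofReal hint]
    · rw [integral_Ioi_rpow_of_lt hexp (by norm_num)]
      congr 1
      rw [show q - p - 1 + 1 = q - p by ring]
      have h1 : q - p ≠ 0 := by linarith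
      have h2 : p - q ≠ 0 := by linarith
      field_simp
      ring
    · filter_upwards [ae_restrict_mem measurableSet_Ioi] with t ht
      exact Real.rpow_nonneg (le_of_lt (lt_trans (by norm_num) ht)) _
  have step4 : ((1:ℝ)/2) ^ (q - p) / (p - q) ≤ 2 ^ p * (2 * p' - 1) / p * M := by
    have hhalf : ((1:ℝ)/2) ^ (q - p) = 2 ^ (p - q) := by
      rw [one_div, Real.inv_rpow (by norm_num), ← Real.rpow_neg (by norm_num), neg_sub]
    have hnum : (2:ℝ) ^ (p - q) ≤ 2 ^ p := by
      apply Real.rpow_le_rpow_of_exponent_le (by norm_num)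
      have : 0 < q := by linarith
      linarith
    rw [hhalf]
    calc (2:ℝ) ^ (p - q) / (p - q) ≤ 2 ^ p / (p / (M * (2 * p' - 1))) := by
          apply div_le_div₀ (Real.rpow_nonneg (by norm_num) p) hnum (by positivity) hpq_lb
      _ = 2 ^ p * (2 * p' - 1) / p * M := by
          field_simp
  calc bpConst p (conjYoung (fun t => t ^ (p / (p - 1) * (1 + 1 / M))))
      ≤ ENNReal.ofReal (((1:ℝ)/2) ^ (q - p) / (p - q)) := by
        rw [← step3]; exact step2
    _ ≤ ENNReal.ofReal (2 ^ p * (2 * p' - 1) / p * M) := ENNReal.ofReal_le_ofReal step4
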